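/- Let n ≥ 1, let J : ℝ⁴ → Mₙ(ℂ) (coordinates denoted (z, z̃, w, w̃)) be continuously differentiable with J(p) invertible for every p and with the matrix functions (∂_w J)J⁻¹ and (∂_z J)J⁻¹ continuously differentiable, and let K : ℝ⁴ → Mₙ(ℂ) be twice continuously differentiable. Suppose (J, K) satisfy the Miura transformation ∂_{z̃}K = −(∂_w J)J⁻¹ and ∂_{w̃}K = −(∂_z J)J⁻¹. Then J satisfies the self-dual Yang–Mills equation ∂_{z̃}((∂_z J)J⁻¹) − ∂_{w̃}((∂_w J)J⁻¹) = 0. -/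

import Mathlib

open Matrix

/-- Partial derivative of a scalar function on `ℝ⁴` with respect to the `μ`-th coordinate. -/
noncomputable def pd (μ : Fin 4) (f : (Fin 4 → ℝ) → ℂ) (p : Fin 4 → ℝ) : ℂ :=
  deriv (fun s => f (Function.update p μ s)) (p μ)

/-- Entrywise partial derivative of a matrix-valued function on `ℝ⁴`. -/
noncomputable def pdM {n : ℕ} (μ : Fin 4) (J : (Fin 4 → ℝ) → Matrix (Fin n) (Fin n) ℂ)
    (p : Fin 4 → ℝ) : Matrix (Fin n) (Fin n) ℂ :=
  Matrix.of fun i j => pd μ (fun q => J q i j) p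

lemma pd_eq_fderiv {μ : Fin 4} {f : (Fin 4 → ℝ) → ℂ} {p : Fin 4 → ℝ}
    (hf : DifferentiableAt ℝ f p) :
    pd μ f p = fderiv ℝ f p (Pi.single μ 1) := by
  have h1 : HasDerivAt (Function.update p μ) (Pi.single μ 1) (p μ) :=
    hasDerivAt_update p μ (p μ)
  have h2 : HasDerivAt (fun s => f (Function.update p μ s))
      (fderiv ℝ f p (Pi.single μ 1)) (p μ) := by
    have hfp : HasFDerivAt f (fderiv ℝ f p) (Function.update p μ (p μ)) := by
      rw [Function.update_eq_self]; exact hf.hasFDerivAt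
    have := hfp.comp_hasDerivAt (p μ) h1
    exact this
  exact h2.deriv

lemma pd_comm {μ ν : Fin 4} {f : (Fin 4 → ℝ) → ℂ} (hf : ContDiff ℝ 2 f) (p : Fin 4 → ℝ) :
    pd μ (pd ν f) p = pd ν (pd μ f) p := by
  have hdiff : ∀ q, HasFDerivAt f (fderiv ℝ f q) q := fun q =>
    (hf.differentiable two_ne_zero q).hasFDerivAt
  have hf' : Differentiable ℝ (fderiv ℝ f) :=
    ((contDiff_succ_iff_fderiv.mp (show ContDiff ℝ (1+1) f by norm_num; exact hf)).2.2).differentiable one_ne_zero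
  have key : ∀ (a b : Fin 4),
      pd a (pd b f) p = fderiv ℝ (fderiv ℝ f) p (Pi.single a 1) (Pi.single b 1) := by
    intro a b
    have heq : (pd b f) = fun q => fderiv ℝ f q (Pi.single b 1) := by
      funext q; exact pd_eq_fderiv (hf.differentiable two_ne_zero q)
    rw [heq]
    have hcomp : DifferentiableAt ℝ (fun q => fderiv ℝ f q (Pi.single b 1)) p := by
      exact ((ContinuousLinearMap.apply ℝ ℂ ((Pi.single b 1 : (Fin 4 → ℝ)))).differentiableAt).comp p (hf' p)
    rw [pd_eq_fderiv hcomp]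
    have : fderiv ℝ (fun q => fderiv ℝ f q (Pi.single b 1)) p =
        (ContinuousLinearMap.apply ℝ ℂ ((Pi.single b 1 : (Fin 4 → ℝ)))).comp
          (fderiv ℝ (fderiv ℝ f) p) := by
      exact ((ContinuousLinearMap.apply ℝ ℂ ((Pi.single b 1 : (Fin 4 → ℝ)))).hasFDerivAt.comp p
        (hf' p).hasFDerivAt).fderiv
    rw [this]; rfl
  rw [key, key]
  exact second_derivative_symmetric hdiff (hf' p).hasFDerivAt _ _

/-- coordinates (z, z̃, w, w̃) = (0, 1, 2, 3).  If `(J, K)` satisfy the Miura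
transformation `∂_z̃ K = −(∂_w J)J⁻¹`, `∂_w̃ K = −(∂_z J)J⁻¹`, then `J` satisfies the SDYM
equation `∂_z̃((∂_z J)J⁻¹) − ∂_w̃((∂_w J)J⁻¹) = 0`. -/
theorem sdym_J_from_miura {n : ℕ} (hn : 1 ≤ n)
    (J K : (Fin 4 → ℝ) → Matrix (Fin n) (Fin n) ℂ)
    (hJ : ∀ i j, ContDiff ℝ 1 fun p => J p i j)
    (hJunit : ∀ p, IsUnit (J p))
    (hzJ : ∀ i j, ContDiff ℝ 1 fun p => (pdM 0 J p * (J p)⁻¹) i j)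
    (hwJ : ∀ i j, ContDiff ℝ 1 fun p => (pdM 2 J p * (J p)⁻¹) i j)
    (hK : ∀ i j, ContDiff ℝ 2 fun p => K p i j)
    (hMiura1 : ∀ p, pdM 1 K p = -(pdM 2 J p * (J p)⁻¹))
    (hMiura2 : ∀ p, pdM 3 K p = -(pdM 0 J p * (J p)⁻¹)) :
    ∀ p, pdM 1 (fun q => pdM 0 J q * (J q)⁻¹) p
        - pdM 3 (fun q => pdM 2 J q * (J q)⁻¹) p = 0 := by
  intro p
  ext i j
  set f : (Fin 4 → ℝ) → ℂ := fun q => K q i j with hf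
  have hA : (fun q => (pdM 0 J q * (J q)⁻¹) i j) = fun q => -(pd 3 f q) := by
    funext q
    have h1 : pdM 0 J q * (J q)⁻¹ = -(pdM 3 K q) := by rw [hMiura2 q, neg_neg]
    rw [h1]
    simp [pdM, hf]
  have hB : (fun q => (pdM 2 J q * (J q)⁻¹) i j) = fun q => -(pd 1 f q) := by
    funext q
    have h1 : pdM 2 J q * (J q)⁻¹ = -(pdM 1 K q) := by rw [hMiura1 q, neg_neg]
    rw [h1]
    simp [pdM, hf]
  have e1 : pdM 1 (fun q => pdM 0 J q * (J q)⁻¹) p i j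
      = pd 1 (fun q => (pdM 0 J q * (J q)⁻¹) i j) p := rfl
  have e2 : pdM 3 (fun q => pdM 2 J q * (J q)⁻¹) p i j
      = pd 3 (fun q => (pdM 2 J q * (J q)⁻¹) i j) p := rfl
  have hneg : ∀ (μ : Fin 4) (g : (Fin 4 → ℝ) → ℂ) (q : Fin 4 → ℝ),
      pd μ (fun r => -(g r)) q = -(pd μ g q) := by
    intro μ g q
    simp only [pd]
    exact deriv.neg
  simp only [Matrix.sub_apply, Matrix.zero_apply, e1, e2, hA, hB, hneg]
  rw [pd_comm (hK i j) p]
  ring
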